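/- Let p₀, p₁, p₂ ∈ ℝ and consider the cubic p(λ) = λ³ + p₂λ² + p₁λ + p₀ and the transformed cubic q(z) = (1 − p₀ + p₁ − p₂)z³ + (3 + 3p₀ − p₁ − p₂)z² + (3 − 3p₀ − p₁ + p₂)z + (1 + p₀ + p₁ + p₂), obtained by the linear fractional substitution λ = (1+z)/(1−z). If 1 − p₀ + p₁ − p₂ ≠ 0, 1 + p₀ + p₁ + p₂ ≠ 0, and every complex root z of q satisfies Re(z) < 0, then every complex root λ of p satisfies |λ| < 1. -/

import Mathlib

open Polynomial

/-- Via the linear fractional substitution `λ = (1+z)/(1−z)`, if all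
complex roots of the transformed cubic `q` have negative real part (and the
leading and constant coefficients of `q` are nonzero), then all complex roots of
the cubic `p` lie strictly inside the unit circle. -/
theorem roots_inside_unit_circle_of_transformed_cubic
    (p₀ p₁ p₂ : ℝ) (p q : Polynomial ℂ)
    (hp : p = X ^ 3 + C (p₂ : ℂ) * X ^ 2 + C (p₁ : ℂ) * X + C (p₀ : ℂ))
    (hq : q = C ((1 - p₀ + p₁ - p₂ : ℝ) : ℂ) * X ^ 3
      + C ((3 + 3 * p₀ - p₁ - p₂ : ℝ) : ℂ) * X ^ 2
      + C ((3 - 3 * p₀ - p₁ + p₂ : ℝ) : ℂ) * X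
      + C ((1 + p₀ + p₁ + p₂ : ℝ) : ℂ))
    (hlead : 1 - p₀ + p₁ - p₂ ≠ 0)
    (hconst : 1 + p₀ + p₁ + p₂ ≠ 0)
    (hroots : ∀ z : ℂ, q.IsRoot z → z.re < 0) :
    ∀ lam : ℂ, p.IsRoot lam → ‖lam‖ < 1 := by
  intro lam hlam
  subst hp hq
  simp only [IsRoot, eval_add, eval_mul, eval_pow, eval_C, eval_X] at hlam hroots
  -- lam ≠ -1
  have hne : lam + 1 ≠ 0 := by
    intro h
    have hl : lam = -1 := eq_neg_of_add_eq_zero_left h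
    rw [hl] at hlam
    apply hlead
    have h2 : ((1 - p₀ + p₁ - p₂ : ℝ) : ℂ) = 0 := by push_cast; linear_combination -hlam
    exact_mod_cast h2
  set z : ℂ := (lam - 1) / (lam + 1) with hz
  have hroot : ((1 - p₀ + p₁ - p₂ : ℝ) : ℂ) * z ^ 3
      + ((3 + 3 * p₀ - p₁ - p₂ : ℝ) : ℂ) * z ^ 2
      + ((3 - 3 * p₀ - p₁ + p₂ : ℝ) : ℂ) * z
      + ((1 + p₀ + p₁ + p₂ : ℝ) : ℂ) = 0 := by
    push_cast
    rw [hz]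
    field_simp
    linear_combination 8 * hlam
  have hre := hroots z hroot
  have hns : 0 < Complex.normSq (lam + 1) := Complex.normSq_pos.mpr hne
  rw [hz, Complex.div_re, ← add_div, div_neg_iff] at hre
  have key : (lam - 1).re * (lam + 1).re + (lam - 1).im * (lam + 1).im < 0 := by
    rcases hre with ⟨h1, h2⟩ | ⟨h1, h2⟩
    · linarith
    · exact h1
  have : Complex.normSq lam < 1 := by
    simp [Complex.add_re, Complex.add_im, Complex.sub_re, Complex.sub_im, Complex.normSq_apply] at key ⊢
    nlinarith
  rw [Complex.norm_def, show (1:ℝ) = Real.sqrt 1 by simp]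
  exact Real.sqrt_lt_sqrt (Complex.normSq_nonneg _) (by simpa using this)
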